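/- Let P be a finite poset of size n and write X_{inc(P)}(x) = Σ_{λ ⊢ n} c^P_λ e_λ(x) (possible since X_{inc(P)} is symmetric of degree n). Then c^P_λ equals the coefficient of the squarefree monomial u_P = Π_{p∈P} u_p in m^P_λ(u), where m^P_λ(u) is the image of the monomial symmetric function m_λ under the ring homomorphism ψ: Λ → Z[u_p : p∈P] sending e_k(x) to e^P_k(u) = Σ_{i_1 <_P ··· <_P i_k} u_{i_1}···u_{i_k}. -/

import Mathlib

open MvPolynomial
open scoped Classical

noncomputable section

/-- A poset is `(3+1)`-free: no induced subposet consisting of a 3-chain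
together with an element incomparable to all of it. -/
def ThreePlusOneFree (P : Type*) [PartialOrder P] : Prop :=
  ¬ ∃ a b c x : P, a < b ∧ b < c ∧
    ¬(x ≤ a ∨ a ≤ x) ∧ ¬(x ≤ b ∨ b ≤ x) ∧ ¬(x ≤ c ∨ c ≤ x)

/-- The `P`-elementary function `e_k^P(u)`, the sum of `u_{i_1} ⋯ u_{i_k}`
over strict chains `i_1 <_P ⋯ <_P i_k`. -/
def eP (P : Type*) [Fintype P] [PartialOrder P] (k : ℕ) : MvPolynomial P ℤ :=
  ∑ f ∈ Finset.univ.filter (fun f : Fin k → P => ∀ a b : Fin k, a < b → f a < f b),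
    ∏ i, X (f i)

/-- `e_k^P` for an integer index, vanishing for negative `k`. -/
def ePz (P : Type*) [Fintype P] [PartialOrder P] (k : ℤ) : MvPolynomial P ℤ :=
  if 0 ≤ k then eP P k.toNat else 0

/-- Conjugate partition: `conj f c` is the length of column `c` (0-indexed)
of the diagram of `f`. -/
def conj (f : ℕ → ℕ) (c : ℕ) : ℕ := Set.ncard {i | c < f i}

/-- `f : ℕ → ℕ` (0-indexed list of parts) is a partition. -/
def IsPartition (f : ℕ → ℕ) : Prop := (∀ i, f (i + 1) ≤ f i) ∧ ∃ N, ∀ i, N ≤ i → f i = 0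

/-- `λ/μ/d` is a cylindric shape. -/
def IsCylShape (lam mu : ℕ → ℕ) (d : ℕ) : Prop :=
  IsPartition lam ∧ IsPartition mu ∧ (∀ i, mu i ≤ lam i) ∧ 0 < lam 0 ∧
    conj lam 0 ≤ conj lam (lam 0 - 1) + d ∧
    conj mu 0 ≤ conj mu (lam 0 - 1) + d ∧ d ≤ conj lam 0

section Arrays
variable {P : Type*} [PartialOrder P]

/-- Column-strictness of the array `A` (a total function; only values on the cells
of the shape `col(α,β)`, over `l` columns, matter): entries strictly increase
down each column. This is the defining condition for a `P`-array. -/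
def ColStrict (A : ℕ → ℕ → P) (l : ℕ) (α β : ℕ → ℕ) : Prop :=
  ∀ c r r', c < l → β c ≤ r → r < r' → r' < α c → A r c < A r' c

/-- `col(α,β)` (with `β` a partition) is a skew partition shape. -/
def IsSkewShape (l : ℕ) (α β : ℕ → ℕ) : Prop :=
  (∀ c, c + 1 < l → α (c + 1) ≤ α c ∧ β (c + 1) ≤ β c) ∧ ∀ c, c < l → β c ≤ α c

/-- Rows of `A` are weakly increasing in `P`: no entry is `>_P` its right neighbour. -/
def RowWeak (A : ℕ → ℕ → P) (l : ℕ) (α β : ℕ → ℕ) : Prop :=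
  ∀ r c, c + 1 < l → β c ≤ r → r < α c → β (c + 1) ≤ r → r < α (c + 1) →
    ¬ A r (c + 1) < A r c

/-- `A` is a `P`-tableau of shape `col(α,β)`. -/
def IsPTableau (A : ℕ → ℕ → P) (l : ℕ) (α β : ℕ → ℕ) : Prop :=
  IsSkewShape l α β ∧ ColStrict A l α β ∧ RowWeak A l α β

/-- The glued array `A^d`: columns `0,…,l-1` of `A` shifted down by `d`, and a copy
of column `0` of `A` as the extra column `l`. -/
def glueArr (A : ℕ → ℕ → P) (l d : ℕ) : ℕ → ℕ → P :=
  fun r c => if c < l then A (r - d) c else A r 0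

/-- Column lengths of the glued shape. -/
def glueCol (f : ℕ → ℕ) (l d : ℕ) : ℕ → ℕ :=
  fun c => if c < l then f c + d else f 0

/-- `(r,j)` is an intersection point of columns `i < j` of `A`
(shape `col(α,β)`), with witness in column `i`. -/
def IsIntPoint (A : ℕ → ℕ → P) (α β : ℕ → ℕ) (i j r : ℕ) : Prop :=
  i < j ∧ β j ≤ r ∧ r < α j ∧
    ∃ w, w + j = r + 1 + i ∧ β i ≤ w ∧ (α i ≤ w ∨ A r j < A w i)

/-- Columns `i < j` of `A` intersect. -/
def Intersecting (A : ℕ → ℕ → P) (α β : ℕ → ℕ) (i j : ℕ) : Prop :=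
  ∃ r, IsIntPoint A α β i j r

/-- `(r,j)` is a `P`-minimal intersection point of the array `A` with columns `0,…,L`. -/
def PMinIP (A : ℕ → ℕ → P) (α β : ℕ → ℕ) (L j r : ℕ) : Prop :=
  j ≤ L ∧ (∃ i, IsIntPoint A α β i j r) ∧
    ∀ j' r' i', j' ≤ L → IsIntPoint A α β i' j' r' → ¬ A r' j' < A r j

/-- `(r,j)` is the rightmost `P`-minimal intersection point. -/
def RightmostPMinIP (A : ℕ → ℕ → P) (α β : ℕ → ℕ) (L j r : ℕ) : Prop :=
  PMinIP A α β L j r ∧ ∀ j' r', PMinIP A α β L j' r' → j' ≤ j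

/-- The cylindric swap `swap(A,i,j,d)` at the `P`-minimal intersection point `m` of
columns `i < j ≤ l` of `A^d` (the minimal intersection point is the lowest-row one,
since column `j` is a chain).  Everything is in the coordinates of `A`; the case
`j = l` is the wrap-around case, where entries move between column `i` and column `0`. -/
def swapArr (A : ℕ → ℕ → P) (l d i j : ℕ) (α β : ℕ → ℕ) : ℕ → ℕ → P :=
  let m := sInf {r | IsIntPoint (glueArr A l d) (glueCol α l d) (glueCol β l d) i j r}
  if j < l then
    fun r c =>
      if c = i ∧ m + 1 + i ≤ r + j + d then A (r + (j - i)) j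
      else if c = j ∧ m + 1 ≤ r + d then A (r - (j - i)) i
      else A r c
  else
    fun r c =>
      if c = i ∧ m + 1 + i ≤ r + j + d then A (r + (j - i) + d) 0
      else if c = 0 ∧ m + 1 ≤ r then A (r - (d + (j - i))) i
      else A r c

end Arrays

/-- A cylindric `P`-tableau of shape `λ/μ/d`, encoded column by column:
`T c p` is the entry of column `c` in the `p`-th cell from the top
(global row `conj μ c + p`).  The condition is that the glued filling `T^d`
is a `P`-tableau: the glued shape is a skew shape, columns strictly increase
in `P`, and rows (including the wrap-around adjacency between the last column
and the copy of column `0` shifted up by `d`) weakly increase in `P`. -/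
def IsCylTab {P : Type*} [PartialOrder P] (lam mu : ℕ → ℕ) (d : ℕ)
    (T : ∀ c : Fin (lam 0), Fin (conj lam c - conj mu c) → P) : Prop :=
  (∀ c, c + 1 < lam 0 → conj lam (c + 1) ≤ conj lam c ∧ conj mu (c + 1) ≤ conj mu c) ∧
  (∀ c, c < lam 0 → conj mu c ≤ conj lam c) ∧
  (0 < lam 0 → conj lam 0 ≤ conj lam (lam 0 - 1) + d ∧ conj mu 0 ≤ conj mu (lam 0 - 1) + d) ∧
  (∀ c p q, p < q → T c p < T c q) ∧
  (∀ (c : Fin (lam 0)) (hc : c.1 + 1 < lam 0)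
      (p : Fin (conj lam c.1 - conj mu c.1)) (q : Fin (conj lam (c.1 + 1) - conj mu (c.1 + 1))),
      conj mu c.1 + p.1 = conj mu (c.1 + 1) + q.1 → ¬ T ⟨c.1 + 1, hc⟩ q < T c p) ∧
  (∀ (h0 : 0 < lam 0) (p : Fin (conj lam (lam 0 - 1) - conj mu (lam 0 - 1)))
      (q : Fin (conj lam 0 - conj mu 0)),
      conj mu (lam 0 - 1) + p.1 + d = conj mu 0 + q.1 →
      ¬ T ⟨0, h0⟩ q < T ⟨lam 0 - 1, Nat.sub_lt h0 Nat.one_pos⟩ p)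

/-- The `u`-monomial weight `u^T` of a tableau. -/
def uT {P : Type*} (lam mu : ℕ → ℕ)
    (T : ∀ c : Fin (lam 0), Fin (conj lam c - conj mu c) → P) : MvPolynomial P ℤ :=
  ∏ c, ∏ p, X (T c p)

/-- Number of occurrences of the value `x` in the tableau `T`. -/
def tabCount {P : Type*} (lam mu : ℕ → ℕ)
    (T : ∀ c : Fin (lam 0), Fin (conj lam c - conj mu c) → P) (x : P) : ℕ :=
  ∑ c, (Finset.univ.filter (fun p => T c p = x)).card

/-- `T` is standard: it contains each element of `P` exactly once. -/
def IsStandardTab {P : Type*} (lam mu : ℕ → ℕ)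
    (T : ∀ c : Fin (lam 0), Fin (conj lam c - conj mu c) → P) : Prop :=
  ∀ x : P, tabCount lam mu T x = 1

/-- The chromatic symmetric polynomial of the incomparability graph `inc(P)`,
in the variables `x_0, …, x_{N-1}`. -/
def chromPoly (P : Type*) [Fintype P] [PartialOrder P] (N : ℕ) : MvPolynomial (Fin N) ℤ :=
  ∑ κ ∈ Finset.univ.filter
      (fun κ : P → Fin N => ∀ a b : P, a ≠ b → ¬(a ≤ b ∨ b ≤ a) → κ a ≠ κ b),
    ∏ v, X (κ v)

end


/-! ### Auxiliary material for the proof of `stmt_14` -/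

noncomputable section StanleyAux
open Finset

section Generic
variable {σ ι : Type*}

lemma aux_prod_monomial_one (s : Finset ι) (w : ι → (σ →₀ ℕ)) :
    (∏ i ∈ s, monomial (w i) (1:ℤ)) = monomial (∑ i ∈ s, w i) 1 := by
  induction s using Finset.cons_induction with
  | empty => simp
  | cons a s ha ih => rw [Finset.prod_cons, ih, Finset.sum_cons, monomial_mul, one_mul]

lemma aux_coeff_sum (s : Finset ι) (w : ι → (σ →₀ ℕ)) (d : σ →₀ ℕ) :
    coeff d (∑ i ∈ s, monomial (w i) (1:ℤ)) = #(s.filter fun i => w i = d) := by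
  rw [coeff_sum]
  rw [Finset.card_filter]
  push_cast
  exact Finset.sum_congr rfl fun i _ => by rw [coeff_monomial]

lemma aux_single_sum_apply [DecidableEq σ] (s : Finset ι) (f : ι → σ) (j : σ) :
    (∑ v ∈ s, Finsupp.single (f v) 1) j = #(s.filter fun v => f v = j) := by
  rw [Finset.sum_apply', Finset.card_filter]
  exact Finset.sum_congr rfl fun v _ => by rw [Finsupp.single_apply]

lemma aux_nat_sum_eq_one {s : Finset ι} {f : ι → ℕ} (h : ∑ i ∈ s, f i = 1) :
    ∃ a ∈ s, f a = 1 ∧ ∀ b ∈ s, b ≠ a → f b = 0 := by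
  obtain ⟨a, ha, hfa⟩ : ∃ a ∈ s, f a ≠ 0 := by
    by_contra hc
    push_neg at hc
    rw [Finset.sum_eq_zero hc] at h
    exact one_ne_zero h.symm
  have hsplit := Finset.add_sum_erase s f ha
  rw [h] at hsplit
  have h1 : f a = 1 ∧ (∑ i ∈ s.erase a, f i) = 0 := by omega
  refine ⟨a, ha, h1.1, fun b hb hba => ?_⟩
  exact (Finset.sum_eq_zero_iff).1 h1.2 b (Finset.mem_erase.2 ⟨hba, hb⟩)

lemma aux_inj_count [Fintype ι] [DecidableEq σ] (f : ι → σ) (hf : Function.Injective f) (p : σ) :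
    #(univ.filter fun a => f a = p) = if p ∈ univ.image f then 1 else 0 := by
  by_cases h : ∃ a, f a = p
  · obtain ⟨a, rfl⟩ := h
    rw [if_pos (Finset.mem_image.2 ⟨a, Finset.mem_univ a, rfl⟩)]
    rw [show (univ.filter fun b => f b = f a) = {a} from ?_, Finset.card_singleton]
    ext b
    simp only [Finset.mem_filter, Finset.mem_univ, true_and, Finset.mem_singleton]
    exact ⟨fun hb => hf hb, fun hb => hb ▸ rfl⟩
  · push_neg at h
    rw [if_neg (by simp only [Finset.mem_image]; rintro ⟨a, _, ha⟩; exact h a ha)]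
    rw [Finset.card_eq_zero]
    ext b
    simp only [Finset.mem_filter, Finset.mem_univ, true_and, Finset.notMem_empty, iff_false]
    exact h b

end Generic

section ChainEnum
variable {P : Type*} [PartialOrder P]

def chainLO (S : Finset P) (hS : ∀ a ∈ S, ∀ b ∈ S, a ≤ b ∨ b ≤ a) :
    LinearOrder {x // x ∈ S} :=
  { (inferInstance : PartialOrder {x // x ∈ S}) with
    le_total := fun a b => hS a a.2 b b.2
    toDecidableLE := Classical.decRel _ }

def chainEnum (S : Finset P) (hS : ∀ a ∈ S, ∀ b ∈ S, a ≤ b ∨ b ≤ a) {k : ℕ}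
    (hk : S.card = k) : Fin k → P :=
  letI := chainLO S hS
  fun a => (S.attach.orderEmbOfFin (by rw [Finset.card_attach]; exact hk) a : {x // x ∈ S}).1

lemma chainEnum_strictMono (S : Finset P) (hS : ∀ a ∈ S, ∀ b ∈ S, a ≤ b ∨ b ≤ a) {k : ℕ}
    (hk : S.card = k) : StrictMono (chainEnum S hS hk) := by
  letI := chainLO S hS
  intro a b hab
  exact (Finset.orderEmbOfFin S.attach (by rw [Finset.card_attach]; exact hk)).strictMono hab

lemma chainEnum_mem (S : Finset P) (hS : ∀ a ∈ S, ∀ b ∈ S, a ≤ b ∨ b ≤ a) {k : ℕ}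
    (hk : S.card = k) (a : Fin k) : chainEnum S hS hk a ∈ S := by
  letI := chainLO S hS
  exact ((S.attach.orderEmbOfFin (by rw [Finset.card_attach]; exact hk)) a).2

lemma chainEnum_unique (S : Finset P) (hS : ∀ a ∈ S, ∀ b ∈ S, a ≤ b ∨ b ≤ a) {k : ℕ}
    (hk : S.card = k) (f : Fin k → P) (hfS : ∀ a, f a ∈ S) (hf : StrictMono f) :
    f = chainEnum S hS hk := by
  letI := chainLO S hS
  have h1 : (fun a => (⟨f a, hfS a⟩ : {x // x ∈ S})) =
      ⇑(S.attach.orderEmbOfFin (by rw [Finset.card_attach]; exact hk)) := by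
    apply Finset.orderEmbOfFin_unique
    · intro x; exact Finset.mem_attach _ _
    · intro a b hab
      exact hf hab
  funext a
  have := congrFun h1 a
  exact congrArg Subtype.val this

lemma chainEnum_image (S : Finset P) (hS : ∀ a ∈ S, ∀ b ∈ S, a ≤ b ∨ b ≤ a) {k : ℕ}
    (hk : S.card = k) : Finset.univ.image (chainEnum S hS hk) = S := by
  apply Finset.eq_of_subset_of_card_le
  · intro x hx
    obtain ⟨a, _, rfl⟩ := Finset.mem_image.1 hx
    exact chainEnum_mem S hS hk a
  · rw [Finset.card_image_of_injective _ (chainEnum_strictMono S hS hk).injective, hk,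
      Finset.card_univ, Fintype.card_fin]

end ChainEnum

def exf {n : ℕ} (μ : Nat.Partition n) : Fin n → ℕ := fun j => μ.parts.toList.getD j 0

def expo {n : ℕ} (μ : Nat.Partition n) : Fin n →₀ ℕ :=
  Finsupp.equivFunOnFinite.symm (exf μ)

lemma expo_apply {n : ℕ} (μ : Nat.Partition n) (j : Fin n) : expo μ j = exf μ j := rfl

lemma parts_card_le {n : ℕ} (μ : Nat.Partition n) : μ.parts.toList.length ≤ n := by
  have h1 : μ.parts.card * 1 ≤ μ.parts.sum :=
    Multiset.card_nsmul_le_sum (fun x hx => μ.parts_pos hx)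
  rw [mul_one] at h1
  simpa [Multiset.length_toList, μ.parts_sum] using h1

lemma exf_pos_iff {n : ℕ} (μ : Nat.Partition n) (j : Fin n) :
    exf μ j ≠ 0 ↔ (j : ℕ) < μ.parts.toList.length := by
  constructor
  · intro h
    by_contra hc
    push_neg at hc
    exact h (List.getD_eq_default _ _ hc)
  · intro h
    have : exf μ j = μ.parts.toList.get ⟨j, h⟩ := List.getD_eq_getElem _ _ h
    rw [this]
    have hmem : μ.parts.toList.get ⟨j, h⟩ ∈ μ.parts := by
      rw [← Multiset.mem_toList]; exact μ.parts.toList.get_mem _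
    exact (μ.parts_pos hmem).ne'

lemma aux_list_prod {M : Type*} [CommMonoid M] (g : ℕ → M) :
    ∀ L : List ℕ, (L.map g).prod = ∏ i ∈ Finset.range L.length, g (L.getD i 0)
  | [] => by simp
  | a :: t => by
    rw [List.map_cons, List.prod_cons, List.length_cons, Finset.prod_range_succ',
      aux_list_prod g t]
    simp [mul_comm]

/-- padding product over parts to a product over `Fin n`. -/
lemma parts_prod_pad {n : ℕ} {M : Type*} [CommMonoid M] (g : ℕ → M) (hg : g 0 = 1)
    (μ : Nat.Partition n) : (μ.parts.map g).prod = ∏ i : Fin n, g (exf μ i) := by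
  have h1 : μ.parts = (μ.parts.toList : Multiset ℕ) := (Multiset.coe_toList _).symm
  rw [h1]
  rw [Multiset.map_coe, Multiset.prod_coe]
  rw [aux_list_prod g]
  have h2 : ∏ i : Fin n, g (exf μ i)
      = ∏ i ∈ Finset.range n, g (μ.parts.toList.getD i 0) :=
    Fin.prod_univ_eq_prod_range (fun i => g (μ.parts.toList.getD i 0)) n
  rw [h2]
  apply Finset.prod_subset (Finset.range_subset_range.2 (parts_card_le μ))
  intro x _ hx
  rw [Finset.mem_range, not_lt] at hx
  rw [List.getD_eq_default _ _ hx, hg]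


lemma support_val_map {n : ℕ} (ν : Nat.Partition n) :
    (expo ν).support.val.map (fun j => expo ν j) = ν.parts := by
  have h := parts_card_le ν
  have hsupp : (expo ν).support = Finset.map (Fin.castLEEmb h) Finset.univ := by
    ext j
    rw [Finsupp.mem_support_iff, Finset.mem_map]
    constructor
    · intro hj
      have hj' := (exf_pos_iff ν j).1 hj
      exact ⟨⟨j, hj'⟩, Finset.mem_univ _, by ext; simp⟩
    · rintro ⟨i, -, rfl⟩
      exact (exf_pos_iff ν _).2 (by simpa using i.2)
  rw [hsupp, Finset.map_val, Multiset.map_map, Fin.univ_def]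
  show Multiset.map ((fun j => (expo ν) j) ∘ ⇑(Fin.castLEEmb h))
      (↑(List.finRange ν.parts.toList.length)) = ν.parts
  rw [Multiset.map_coe]
  have hfn : (List.finRange ν.parts.toList.length).map
      ((fun j => (expo ν) j) ∘ ⇑(Fin.castLEEmb h)) = ν.parts.toList := by
    have : ((fun j => (expo ν) j) ∘ ⇑(Fin.castLEEmb h))
        = ν.parts.toList.get := by
      funext i
      show exf ν (Fin.castLE h i) = _
      unfold exf
      simp only [Fin.coe_castLE]
      exact List.getD_eq_getElem _ _ i.2
    rw [this, List.map_get_finRange]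
  rw [hfn, Multiset.coe_toList]

lemma card_toMultiset_expo {n : ℕ} (ν : Nat.Partition n) :
    Multiset.card (expo ν).toMultiset = n := by
  rw [Finsupp.card_toMultiset]
  have : ((expo ν).sum fun _ => id) = ((expo ν).support.val.map (fun j => expo ν j)).sum := rfl
  rw [this, support_val_map, ν.parts_sum]

lemma ofSym_expo {n : ℕ} (ν : Nat.Partition n) (s : Sym (Fin n) n)
    (hs : s.1 = (expo ν).toMultiset) : Nat.Partition.ofSym s = ν := by
  ext1
  show (s.1.dedup.map s.1.count) = ν.parts
  rw [hs]
  have hd : ((expo ν).toMultiset).dedup = (expo ν).support.val := by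
    rw [← Multiset.toFinset_val, Finsupp.toFinset_toMultiset]
  rw [hd]
  rw [show (Multiset.count · (expo ν).toMultiset) = (fun j => expo ν j) from
    funext fun j => Finsupp.count_toMultiset _ j]
  exact support_val_map ν

lemma prod_multiset_X {σ : Type*} [DecidableEq σ] (t : Multiset σ) :
    ((t.map X).prod : MvPolynomial σ ℤ) = monomial (Multiset.toFinsupp t) 1 := by
  induction t using Multiset.induction with
  | empty => simp
  | cons a s ih =>
    have hc : (a ::ₘ s) = {a} + s := by
      rw [Multiset.singleton_add]
    rw [Multiset.map_cons, Multiset.prod_cons, ih, hc, Multiset.toFinsupp_add,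
      Multiset.toFinsupp_singleton, X, monomial_mul, one_mul]

lemma coeff_msymm {n : ℕ} (lam ν : Nat.Partition n) :
    coeff (expo ν) (msymm (Fin n) ℤ lam) = if lam = ν then 1 else 0 := by
  have hs₀ : ∀ t : Multiset (Fin n), Multiset.toFinsupp t = expo ν ↔ t = (expo ν).toMultiset :=
    fun t => Multiset.toFinsupp_eq_iff
  set s₀ : Sym (Fin n) n := ⟨(expo ν).toMultiset, card_toMultiset_expo ν⟩ with hs₀def
  rw [msymm, coeff_sum]
  have hterm : ∀ s : {a : Sym (Fin n) n // Nat.Partition.ofSym a = lam},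
      coeff (expo ν) ((s.1.1.map X).prod) = (if s.1 = s₀ then 1 else 0 : ℤ) := by
    intro s
    rw [prod_multiset_X, coeff_monomial]
    by_cases hcase : s.1 = s₀
    · rw [if_pos ((hs₀ _).2 (congrArg Subtype.val hcase)), if_pos hcase]
    · rw [if_neg (fun hEq => hcase (Subtype.ext ((hs₀ _).1 hEq))), if_neg hcase]
  rw [Finset.sum_congr rfl (fun s _ => hterm s)]
  by_cases hl : lam = ν
  · subst hl
    have hmem : Nat.Partition.ofSym s₀ = lam := ofSym_expo _ _ rfl
    rw [if_pos rfl]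
    rw [show (fun s : {a : Sym (Fin n) n // Nat.Partition.ofSym a = lam} =>
        (if s.1 = s₀ then (1:ℤ) else 0)) = fun s => if s = ⟨s₀, hmem⟩ then (1:ℤ) else 0 from
      funext fun s => by
        by_cases hcs : s = ⟨s₀, hmem⟩
        · rw [if_pos (congrArg Subtype.val hcs), if_pos hcs]
        · rw [if_neg (fun h' => hcs (Subtype.ext h')), if_neg hcs]]
    rw [Finset.sum_ite_eq' Finset.univ (⟨s₀, hmem⟩ :
      {a : Sym (Fin n) n // Nat.Partition.ofSym a = lam}) (fun _ => (1:ℤ))]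
    rw [if_pos (Finset.mem_univ _)]
  · rw [if_neg hl]
    apply Finset.sum_eq_zero
    intro s _
    rw [if_neg]
    intro hEq
    exact hl (s.2.symm.trans (ofSym_expo ν s.1 (congrArg Subtype.val hEq)))


lemma aux_prod_X {σ ι : Type*} (s : Finset ι) (f : ι → σ) :
    (∏ i ∈ s, (X (f i) : MvPolynomial σ ℤ)) = monomial (∑ i ∈ s, Finsupp.single (f i) 1) 1 := by
  induction s using Finset.cons_induction with
  | empty => simp
  | cons a s ha ih => rw [Finset.prod_cons, ih, Finset.sum_cons, X, monomial_mul, one_mul]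

lemma coeff_prod_esymm {N : ℕ} (c : Fin N → ℕ) (d : Fin N →₀ ℕ) :
    coeff d (∏ i : Fin N, esymm (Fin N) ℤ (c i)) =
    #(univ.filter fun F : Fin N → Finset (Fin N) =>
      (∀ i, (F i).card = c i) ∧ ∀ j, #(univ.filter fun i => j ∈ F i) = d j) := by
  have h1 : ∀ i : Fin N, esymm (Fin N) ℤ (c i)
      = ∑ t ∈ powersetCard (c i) univ, monomial (∑ j ∈ t, Finsupp.single j 1) (1:ℤ) :=
    fun i => esymm_eq_sum_monomial _ _ _
  rw [Finset.prod_congr rfl (fun i _ => h1 i), Finset.prod_univ_sum]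
  rw [Finset.sum_congr rfl (fun F _ => aux_prod_monomial_one univ (fun i => ∑ j ∈ F i, Finsupp.single j 1))]
  rw [aux_coeff_sum]
  congr 1
  congr 1
  ext F
  simp only [Finset.mem_filter, Fintype.mem_piFinset, Finset.mem_powersetCard_univ,
    Finset.mem_univ, true_and]
  have key : ∀ j : Fin N, (∑ x : Fin N, ∑ c ∈ F x, (Finsupp.single c (1:ℕ)) j)
      = #(filter (fun i => j ∈ F i) univ) := by
    intro j
    rw [Finset.card_filter]
    apply Finset.sum_congr rfl
    intro i _
    rw [Finset.sum_congr rfl (fun k (_ : k ∈ F i) => Finsupp.single_apply),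
      Finset.sum_ite_eq' (F i) j (fun _ => 1)]
  constructor
  · rintro ⟨hcard, hsum⟩
    refine ⟨hcard, fun j => ?_⟩
    have h2 := congrFun (congrArg (fun (g : Fin N →₀ ℕ) => (g : Fin N → ℕ)) hsum) j
    simp only [Finsupp.coe_finset_sum, Finset.sum_apply] at h2
    rw [← h2, key j]
  · rintro ⟨hcard, hcnt⟩
    refine ⟨hcard, ?_⟩
    ext j
    simp only [Finsupp.coe_finset_sum, Finset.sum_apply]
    rw [key j, hcnt j]

variable {P : Type*} [Fintype P] [PartialOrder P]

lemma coeff_chromPoly {N : ℕ} (d : Fin N →₀ ℕ) :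
    coeff d (chromPoly P N) =
    #(univ.filter fun κ : P → Fin N =>
      (∀ a b : P, a ≠ b → ¬(a ≤ b ∨ b ≤ a) → κ a ≠ κ b) ∧
      ∀ j, #(univ.filter fun p => κ p = j) = d j) := by
  rw [chromPoly, Finset.sum_congr rfl (fun κ _ => aux_prod_X univ κ), aux_coeff_sum,
    Finset.filter_filter]
  congr 1
  congr 1
  ext κ
  simp only [Finset.mem_filter, Finset.mem_univ, true_and]
  constructor
  · rintro ⟨hp, hsum⟩
    refine ⟨hp, fun j => ?_⟩
    rw [← aux_single_sum_apply univ κ j, hsum]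
  · rintro ⟨hp, hcnt⟩
    refine ⟨hp, ?_⟩
    ext j
    rw [aux_single_sum_apply univ κ j, hcnt j]

lemma coeff_prod_eP {n : ℕ} (c : Fin n → ℕ) (d : P →₀ ℕ) :
    coeff d (∏ i : Fin n, eP P (c i)) =
    #(univ.filter fun G : (i : Fin n) → Fin (c i) → P =>
      (∀ i, ∀ a b : Fin (c i), a < b → G i a < G i b) ∧
      ∀ p, (∑ i, #(univ.filter fun a => G i a = p)) = d p) := by
  rw [show (fun i : Fin n => eP P (c i)) = fun i =>
      ∑ f ∈ Finset.univ.filter (fun f : Fin (c i) → P => ∀ a b : Fin (c i), a < b → f a < f b),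
        monomial (∑ a, Finsupp.single (f a) 1) (1:ℤ) from funext fun i => by
    rw [eP]
    exact Finset.sum_congr rfl fun f _ => aux_prod_X univ f]
  rw [Finset.prod_univ_sum]
  rw [Finset.sum_congr rfl (fun G _ => aux_prod_monomial_one univ
    (fun i => ∑ a, Finsupp.single (G i a) 1))]
  rw [aux_coeff_sum]
  congr 1
  congr 1
  ext G
  simp only [Finset.mem_filter, Fintype.mem_piFinset, Finset.mem_univ, true_and]
  have key : ∀ p : P, (∑ i, ∑ a, (Finsupp.single (G i a) (1:ℕ)) p)
      = ∑ i, #(univ.filter fun a => G i a = p) := by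
    intro p
    apply Finset.sum_congr rfl
    intro i _
    rw [← Finset.sum_apply' p]
    exact aux_single_sum_apply univ (G i) p
  constructor
  · rintro ⟨hchain, hsum⟩
    refine ⟨hchain, fun p => ?_⟩
    have h2 := congrFun (congrArg (fun (g : P →₀ ℕ) => (g : P → ℕ)) hsum) p
    simp only [Finsupp.coe_finset_sum, Finset.sum_apply] at h2
    rw [← key p, h2]
  · rintro ⟨hchain, hcnt⟩
    refine ⟨hchain, ?_⟩
    ext p
    simp only [Finsupp.coe_finset_sum, Finset.sum_apply]
    rw [key p, hcnt p]


lemma coeff_esymmPart {n : ℕ} (α β : Nat.Partition n) :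
    coeff (expo β) (esymmPart (Fin n) ℤ α) =
    #(univ.filter fun F : Fin n → Finset (Fin n) =>
      (∀ i, (F i).card = exf α i) ∧ ∀ j, #(univ.filter fun i => j ∈ F i) = expo β j) := by
  rw [esymmPart, parts_prod_pad _ (esymm_zero _ _) α, coeff_prod_esymm]

lemma coeff_esymmPart_symm {n : ℕ} (μ ν : Nat.Partition n) :
    coeff (expo ν) (esymmPart (Fin n) ℤ μ) = coeff (expo μ) (esymmPart (Fin n) ℤ ν) := by
  rw [coeff_esymmPart, coeff_esymmPart]
  congr 1
  apply Finset.card_bij'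
    (i := fun F _ => (fun j => univ.filter fun i => j ∈ F i : Fin n → Finset (Fin n)))
    (j := fun F _ => (fun j => univ.filter fun i => j ∈ F i : Fin n → Finset (Fin n)))
  · intro F hF
    rw [Finset.mem_filter] at hF ⊢
    obtain ⟨-, hrow, hcol⟩ := hF
    refine ⟨Finset.mem_univ _, fun j => hcol j, fun i => ?_⟩
    have : (univ.filter fun j => i ∈ univ.filter fun i' => j ∈ F i') = F i := by
      ext j
      simp only [Finset.mem_filter, Finset.mem_univ, true_and]
    rw [this]
    exact hrow i
  · intro F hF
    rw [Finset.mem_filter] at hF ⊢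
    obtain ⟨-, hrow, hcol⟩ := hF
    refine ⟨Finset.mem_univ _, fun j => hcol j, fun i => ?_⟩
    have : (univ.filter fun j => i ∈ univ.filter fun i' => j ∈ F i') = F i := by
      ext j
      simp only [Finset.mem_filter, Finset.mem_univ, true_and]
    rw [this]
    exact hrow i
  · intro F _
    funext i
    ext j
    simp only [Finset.mem_filter, Finset.mem_univ, true_and]
  · intro F _
    funext i
    ext j
    simp only [Finset.mem_filter, Finset.mem_univ, true_and]


lemma eP_zero : eP P 0 = 1 := by
  rw [eP]
  rw [show (Finset.univ.filter (fun f : Fin 0 → P => ∀ a b : Fin 0, a < b → f a < f b))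
      = Finset.univ from Finset.filter_true_of_mem (fun f _ => fun a => a.elim0)]
  simp

/-- The key combinatorial bijection. -/
lemma coeff_eP_chrom (μ : Nat.Partition (Fintype.card P)) :
    coeff (Finsupp.equivFunOnFinite.symm fun _ : P => 1) ((μ.parts.map (eP P)).prod)
      = coeff (expo μ) (chromPoly P (Fintype.card P)) := by
  rw [parts_prod_pad (eP P) eP_zero μ, coeff_prod_eP, coeff_chromPoly]
  congr 1
  have huP : ∀ p : P, (Finsupp.equivFunOnFinite.symm fun _ : P => (1:ℕ)) p = 1 := fun _ => rfl
  have hexpo : ∀ j, expo μ j = exf μ j := fun _ => rfl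
  -- uniqueness of covering index for G in the first set
  have huniq : ∀ G : (i : Fin (Fintype.card P)) → Fin (exf μ i) → P,
      (∀ p, (∑ i, #(univ.filter fun a => G i a = p))
        = (Finsupp.equivFunOnFinite.symm fun _ : P => (1:ℕ)) p) →
      ∀ p : P, ∃! i, i ∈ (univ : Finset (Fin (Fintype.card P))) ∧ ∃ a, G i a = p := by
    intro G hcnt p
    have h1 := hcnt p
    rw [huP] at h1
    obtain ⟨i₀, -, hi1, hi0⟩ := aux_nat_sum_eq_one h1
    obtain ⟨a₀, ha₀⟩ : ∃ a, G i₀ a = p := by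
      have : (univ.filter fun a => G i₀ a = p).Nonempty := by
        rw [← Finset.card_pos, hi1]; exact Nat.one_pos
      obtain ⟨a, ha⟩ := this
      exact ⟨a, (Finset.mem_filter.1 ha).2⟩
    refine ⟨i₀, ⟨Finset.mem_univ _, a₀, ha₀⟩, ?_⟩
    rintro i ⟨-, a, ha⟩
    by_contra hne
    have h0 := hi0 i (Finset.mem_univ _) hne
    have : a ∈ univ.filter fun a => G i a = p := Finset.mem_filter.2 ⟨Finset.mem_univ _, ha⟩
    rw [Finset.card_eq_zero] at h0
    rw [h0] at this
    exact absurd this (Finset.notMem_empty a)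
  -- fibers of proper colorings are chains
  have hfibchain : ∀ κ : P → Fin (Fintype.card P), (∀ a b : P, a ≠ b → ¬(a ≤ b ∨ b ≤ a) → κ a ≠ κ b) →
      ∀ j, ∀ a ∈ (univ.filter fun p => κ p = j), ∀ b ∈ (univ.filter fun p => κ p = j),
        a ≤ b ∨ b ≤ a := by
    intro κ hp j a ha b hb
    rcases eq_or_ne a b with rfl | hab
    · exact Or.inl le_rfl
    by_contra hcomp
    exact hp a b hab hcomp
      ((Finset.mem_filter.1 ha).2.trans (Finset.mem_filter.1 hb).2.symm)
  have hGcnt : ∀ (κ : P → Fin (Fintype.card P))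
      (hκ : κ ∈ univ.filter fun κ : P → Fin (Fintype.card P) =>
        (∀ a b : P, a ≠ b → ¬(a ≤ b ∨ b ≤ a) → κ a ≠ κ b) ∧
        ∀ j, #(univ.filter fun p => κ p = j) = expo μ j),
      ∀ p : P,
      (∑ i, #(univ.filter fun a => chainEnum (univ.filter fun q => κ q = i)
          (hfibchain κ (Finset.mem_filter.1 hκ).2.1 i)
          ((Finset.mem_filter.1 hκ).2.2 i) a = p))
        = (Finsupp.equivFunOnFinite.symm fun _ : P => (1:ℕ)) p := by
    intro κ hκ p
    rw [huP]
    have hterm : ∀ (i : Fin (Fintype.card P))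
        (hch : ∀ a ∈ (univ.filter fun q => κ q = i), ∀ b ∈ (univ.filter fun q => κ q = i),
          a ≤ b ∨ b ≤ a)
        (hcd : #(univ.filter fun q => κ q = i) = expo μ i),
        #(univ.filter fun a => chainEnum (univ.filter fun q => κ q = i) hch hcd a = p)
          = if κ p = i then 1 else 0 := by
      intro i hch hcd
      rw [aux_inj_count _ (chainEnum_strictMono _ _ _).injective p, chainEnum_image]
      by_cases hpi : κ p = i
      · rw [if_pos hpi, if_pos (Finset.mem_filter.2 ⟨Finset.mem_univ _, hpi⟩ :
          p ∈ univ.filter fun q => κ q = i)]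
      · rw [if_neg hpi, if_neg ((fun hmem => hpi (Finset.mem_filter.1 hmem).2) :
          ¬ p ∈ univ.filter fun q => κ q = i)]
    simp only [hterm]
    simp
  apply Finset.card_bij'
    (i := fun G hG p => Finset.choose (fun i => ∃ a, G i a = p) univ
      (huniq G (Finset.mem_filter.1 hG).2.2 p))
    (j := fun κ hκ j => chainEnum (univ.filter fun p => κ p = j)
      (hfibchain κ (Finset.mem_filter.1 hκ).2.1 j)
      ((Finset.mem_filter.1 hκ).2.2 j))
  case hi =>
    intro G hG
    obtain ⟨-, hchain, hcnt⟩ := Finset.mem_filter.1 hG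
    rw [Finset.mem_filter]
    refine ⟨Finset.mem_univ _, ?_, ?_⟩
    · -- properness
      intro a b hab hcomp heq
      replace heq : Finset.choose (fun i => ∃ x, G i x = a) univ
            (huniq G (Finset.mem_filter.1 hG).2.2 a)
          = Finset.choose (fun i => ∃ x, G i x = b) univ
            (huniq G (Finset.mem_filter.1 hG).2.2 b) := heq
      obtain ⟨x, hx⟩ : ∃ x, G (Finset.choose (fun i => ∃ x, G i x = a) univ
          (huniq G (Finset.mem_filter.1 hG).2.2 a)) x = a :=
        (Finset.choose_spec (fun i => ∃ x, G i x = a) univ _).2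
      obtain ⟨y, hy⟩ : ∃ y, G (Finset.choose (fun i => ∃ x, G i x = a) univ
          (huniq G (Finset.mem_filter.1 hG).2.2 a)) y = b := by
        rw [heq]
        exact (Finset.choose_spec (fun i => ∃ x, G i x = b) univ _).2
      rcases lt_trichotomy x y with h | h | h
      · have h2 := hchain _ x y h
        rw [hx, hy] at h2
        exact hcomp (Or.inl h2.le)
      · rw [← hx, ← hy, h] at hab
        exact hab rfl
      · have h2 := hchain _ y x h
        rw [hx, hy] at h2
        exact hcomp (Or.inr h2.le)
    · -- fiber sizes
      intro j
      rw [hexpo]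
      have himg : (univ.filter fun p =>
          Finset.choose (fun i => ∃ a, G i a = p) univ
            (huniq G (Finset.mem_filter.1 hG).2.2 p) = j)
          = univ.image (G j) := by
        ext p
        simp only [Finset.mem_filter, Finset.mem_univ, true_and, Finset.mem_image]
        constructor
        · rintro rfl
          obtain ⟨x, hx⟩ := (Finset.choose_spec (fun i => ∃ a, G i a = p) univ
            (huniq G (Finset.mem_filter.1 hG).2.2 p)).2
          exact ⟨x, hx⟩
        · rintro ⟨x, rfl⟩
          refine ExistsUnique.unique (huniq G (Finset.mem_filter.1 hG).2.2 (G j x))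
            ?_ ⟨Finset.mem_univ _, x, rfl⟩
          exact Finset.choose_spec _ _ _
      rw [himg, Finset.card_image_of_injective _ (fun a b hab => ?_), Finset.card_univ,
        Fintype.card_fin]
      rcases lt_trichotomy a b with h | h | h
      · exact absurd (hchain j a b h) (by rw [hab]; exact lt_irrefl _)
      · exact h
      · exact absurd (hchain j b a h) (by rw [hab]; exact lt_irrefl _)
  case hj =>
    intro κ hκ
    rw [Finset.mem_filter]
    exact ⟨Finset.mem_univ _, fun j => chainEnum_strictMono _ _ _, hGcnt κ hκ⟩
  case left_inv =>
    intro G hG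
    obtain ⟨-, hchain, hcnt⟩ := Finset.mem_filter.1 hG
    funext i
    refine (chainEnum_unique _ _ _ (G i) (fun a => ?_) (hchain i)).symm
    rw [Finset.mem_filter]
    refine ⟨Finset.mem_univ _, ?_⟩
    refine ExistsUnique.unique (huniq G (Finset.mem_filter.1 hG).2.2 (G i a))
      ?_ ⟨Finset.mem_univ _, a, rfl⟩
    exact Finset.choose_spec _ _ _
  case right_inv =>
    intro κ hκ
    funext p
    refine ExistsUnique.unique (huniq _ (hGcnt κ hκ) p) ?_ ⟨Finset.mem_univ _, ?_⟩
    · exact Finset.choose_spec _ _ _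
    · have hpmem : p ∈ univ.image (chainEnum (univ.filter fun q => κ q = κ p)
          (hfibchain κ (Finset.mem_filter.1 hκ).2.1 (κ p))
          ((Finset.mem_filter.1 hκ).2.2 (κ p))) := by
        rw [chainEnum_image]
        exact Finset.mem_filter.2 ⟨Finset.mem_univ _, rfl⟩
      obtain ⟨a, -, ha⟩ := Finset.mem_image.1 hpmem
      exact ⟨a, ha⟩


end StanleyAux

/-- for a finite poset `P` with `|P| = n` and `λ ⊢ n`, the
`e`-expansion coefficient `c^P_λ` of `X_{inc(P)}` equals the coefficient of the
squarefree monomial `u_P = Π_p u_p` in `m^P_λ(u) = ψ(m_λ)`, where `ψ` sends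
`e_k(x)` to `e^P_k(u)` (so `ψ(m_λ) = Σ_μ b_μ Π_i e^P_{μ_i}` whenever
`m_λ = Σ_μ b_μ e_μ`). -/
theorem stmt_14 (P : Type*) [Fintype P] [PartialOrder P]
    (lam : Nat.Partition (Fintype.card P))
    (coef : Nat.Partition (Fintype.card P) → ℤ)
    (hcoef : ∀ N, chromPoly P N
        = ∑ μ : Nat.Partition (Fintype.card P), C (coef μ) * esymmPart (Fin N) ℤ μ)
    (b : Nat.Partition (Fintype.card P) → ℤ)
    (hb : ∀ N, msymm (Fin N) ℤ lam
        = ∑ μ : Nat.Partition (Fintype.card P), C (b μ) * esymmPart (Fin N) ℤ μ) :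
    coef lam
      = MvPolynomial.coeff (Finsupp.equivFunOnFinite.symm fun _ : P => 1)
          (∑ μ : Nat.Partition (Fintype.card P),
            C (b μ) * (μ.parts.map (fun k => eP P k)).prod) := by
  symm
  rw [coeff_sum]
  rw [Finset.sum_congr rfl (fun μ (_ : μ ∈ Finset.univ) => by
    rw [coeff_C_mul, show (μ.parts.map (fun k => eP P k)).prod = (μ.parts.map (eP P)).prod
      from rfl, coeff_eP_chrom μ] :
    ∀ μ ∈ Finset.univ, coeff (Finsupp.equivFunOnFinite.symm fun _ : P => 1)
        (C (b μ) * (μ.parts.map (fun k => eP P k)).prod)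
      = b μ * coeff (expo μ) (chromPoly P (Fintype.card P)))]
  have h2 : ∀ μ : Nat.Partition (Fintype.card P), coeff (expo μ) (chromPoly P (Fintype.card P))
      = ∑ ν : Nat.Partition (Fintype.card P), coef ν * coeff (expo μ) (esymmPart (Fin (Fintype.card P)) ℤ ν) := by
    intro μ
    rw [hcoef (Fintype.card P), coeff_sum]
    exact Finset.sum_congr rfl fun ν _ => coeff_C_mul _ _ _
  rw [Finset.sum_congr rfl fun μ _ => by rw [h2 μ]]
  rw [show (∑ μ : Nat.Partition (Fintype.card P), b μ *
        ∑ ν : Nat.Partition (Fintype.card P), coef ν * coeff (expo μ) (esymmPart (Fin (Fintype.card P)) ℤ ν))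
      = ∑ ν : Nat.Partition (Fintype.card P), coef ν *
        ∑ μ : Nat.Partition (Fintype.card P), b μ * coeff (expo ν) (esymmPart (Fin (Fintype.card P)) ℤ μ) from by
    simp only [Finset.mul_sum]
    rw [Finset.sum_comm]
    apply Finset.sum_congr rfl
    intro ν _
    apply Finset.sum_congr rfl
    intro μ _
    rw [coeff_esymmPart_symm μ ν]
    ring]
  have h3 : ∀ ν : Nat.Partition (Fintype.card P),
      (∑ μ : Nat.Partition (Fintype.card P), b μ * coeff (expo ν) (esymmPart (Fin (Fintype.card P)) ℤ μ))
        = if lam = ν then 1 else 0 := by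
    intro ν
    rw [← coeff_msymm lam ν, hb (Fintype.card P), coeff_sum]
    exact Finset.sum_congr rfl fun μ _ => (coeff_C_mul _ _ _).symm
  rw [Finset.sum_congr rfl fun ν _ => by rw [h3 ν]]
  rw [Finset.sum_congr rfl fun ν (_ : ν ∈ Finset.univ) => (by
    rw [mul_ite, mul_one, mul_zero] :
    coef ν * (if lam = ν then (1:ℤ) else 0) = if lam = ν then coef ν else 0)]
  rw [Finset.sum_ite_eq Finset.univ lam coef, if_pos (Finset.mem_univ _)]
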